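/- Let 𝒜 be a unital C*-algebra, τ be a state on 𝒜, J ⊆ ℝ be an interval, and f, g : J → ℝ be continuous synchronous functions. Then for every self-adjoint element A of 𝒜 with spectrum contained in J, τ(f(A)g(A)) ≥ τ(f(A))·τ(g(A)). -/

import Mathlib

open scoped ComplexOrder

/-- Chebyshev inequality for a state on a unital C*-algebra and synchronous functions:
`τ(f(A)g(A)) ≥ τ(f(A))τ(g(A))`. -/
theorem chebyshev_state_sync {𝒜 : Type*} [CStarAlgebra 𝒜] [PartialOrder 𝒜]
    [StarOrderedRing 𝒜] (τ : 𝒜 →ₗ[ℂ] ℂ) (hτone : τ 1 = 1)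
    (hτpos : ∀ a : 𝒜, 0 ≤ a → 0 ≤ τ a)
    (J : Set ℝ) (hJ : J.OrdConnected) (f g : ℝ → ℝ)
    (hfc : ContinuousOn f J) (hgc : ContinuousOn g J)
    (hsync : ∀ s ∈ J, ∀ t ∈ J, 0 ≤ (f t - f s) * (g t - g s))
    (A : 𝒜) (hA : IsSelfAdjoint A) (hAJ : spectrum ℝ A ⊆ J) :
    (τ (cfc f A * cfc g A)).re ≥ (τ (cfc f A)).re * (τ (cfc g A)).re := by
  have hfS : ContinuousOn f (spectrum ℝ A) := hfc.mono hAJ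
  have hgS : ContinuousOn g (spectrum ℝ A) := hgc.mono hAJ
  have hfgS : ContinuousOn (fun t => f t * g t) (spectrum ℝ A) := hfS.mul hgS
  set F := cfc f A with hF
  set G := cfc g A with hG
  set a : ℝ := (τ F).re with ha
  set b : ℝ := (τ G).re with hb
  set C : ℝ := (τ (F * G)).re with hC
  -- decomposition of cfc of an affine combination
  have key : ∀ c r r' : ℝ,
      cfc (fun t => c - r * g t - r' * f t + f t * g t) A
        = algebraMap ℝ 𝒜 c - r • G - r' • F + F * G := by
    intro c r r'
    rw [cfc_add A (fun t => c - r * g t - r' * f t) (fun t => f t * g t) (((continuousOn_const (c := c)).sub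
        ((continuousOn_const (c := r)).mul hgS)).sub
        ((continuousOn_const (c := r')).mul hfS)) hfgS,
      cfc_sub (fun t => c - r * g t) (fun t => r' * f t) A ((continuousOn_const (c := c)).sub
        ((continuousOn_const (c := r)).mul hgS)) ((continuousOn_const (c := r')).mul hfS),
      cfc_sub (fun _ => c) (fun t => r * g t) A (continuousOn_const (c := c)) ((continuousOn_const (c := r)).mul hgS),
      cfc_const c A hA, cfc_const_mul r g A hgS, cfc_const_mul r' f A hfS,
      cfc_mul f g A hfS hgS]
  -- computation of the real part of τ on such a combination
  have hτre : ∀ c r r' : ℝ,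
      (τ (algebraMap ℝ 𝒜 c - r • G - r' • F + F * G)).re = c - r * b - r' * a + C := by
    intro c r r'
    rw [map_add, map_sub, map_sub, τ.map_smul_of_tower, τ.map_smul_of_tower,
      Algebra.algebraMap_eq_smul_one, τ.map_smul_of_tower, hτone]
    simp [Complex.add_re, Complex.sub_re, Complex.smul_re, ← ha, ← hb, ← hC]
  -- step 1 : pointwise inequality for the state values
  have step1 : ∀ s ∈ spectrum ℝ A, 0 ≤ f s * g s - f s * b - g s * a + C := by
    intro s hs
    have hfun : (fun t => (f t - f s) * (g t - g s))
        = fun t => f s * g s - f s * g t - g s * f t + f t * g t := by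
      funext t; ring
    have hpos : (0 : 𝒜) ≤ cfc (fun t => (f t - f s) * (g t - g s)) A :=
      cfc_nonneg fun t ht => hsync s (hAJ hs) t (hAJ ht)
    rw [hfun, key (f s * g s) (f s) (g s)] at hpos
    have := hτpos _ hpos
    have hre := (Complex.le_def.mp this).1
    rw [hτre (f s * g s) (f s) (g s)] at hre
    simpa using hre
  -- step 2 : integrate the pointwise inequality
  have hψc : ContinuousOn (fun s => C - a * g s - b * f s + f s * g s) (spectrum ℝ A) := by
    exact ((continuousOn_const.sub (continuousOn_const.mul hgS)).sub
      (continuousOn_const.mul hfS)).add hfgS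
  have hpos2 : (0 : 𝒜) ≤ cfc (fun s => C - a * g s - b * f s + f s * g s) A :=
    cfc_nonneg fun s hs => by have := step1 s hs; linarith
  rw [key C a b] at hpos2
  have := hτpos _ hpos2
  have hre := (Complex.le_def.mp this).1
  rw [hτre C a b] at hre
  simp only [Complex.zero_re] at hre
  have : a * b ≤ C := by linarith [mul_comm a b]
  simpa [ge_iff_le, hC, ha, hb] using this
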